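/- For every tree Q = Q(r,m,n) of diameter four, χ'_es(Q) = χ'_s(Q). -/

import Mathlib

open SimpleGraph

variable {V : Type*}

/-- A vertex distinguishing proper edge `k`-coloring (vdec): a proper edge coloring
(edges sharing an endpoint get different colors) such that distinct vertices have
distinct sets of colors on their incident edges. -/
def IsVDEC (G : SimpleGraph V) (k : ℕ) (c : Sym2 V → Fin k) : Prop :=
  (∀ ⦃u v w : V⦄, G.Adj u v → G.Adj u w → v ≠ w → c s(u, v) ≠ c s(u, w)) ∧
  (∀ u v : V, u ≠ v →
    {i : Fin k | ∃ w, G.Adj u w ∧ c s(u, w) = i} ≠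
    {i : Fin k | ∃ w, G.Adj v w ∧ c s(v, w) = i})

/-- `χ'ₛ(G)`: the minimum number of colors in a vdec of `G`. -/
noncomputable def vdecNum (G : SimpleGraph V) : ℕ :=
  sInf {k : ℕ | ∃ c : Sym2 V → Fin k, IsVDEC G k c}

/-- `n_d(G)`: the number of vertices of degree `d` in `G`. -/
noncomputable def numDeg (G : SimpleGraph V) (d : ℕ) : ℕ :=
  Nat.card {v : V // Nat.card (G.neighborSet v) = d}

/-- An edge coloring is equitable if any two color classes differ in size by at most one. -/
def IsEquitable (G : SimpleGraph V) (k : ℕ) (c : Sym2 V → Fin k) : Prop :=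
  ∀ i j : Fin k,
    (Nat.card {e : Sym2 V // e ∈ G.edgeSet ∧ c e = i} : ℤ) -
      (Nat.card {e : Sym2 V // e ∈ G.edgeSet ∧ c e = j} : ℤ) ≤ 1

/-- `χ'ₑₛ(G)`: the minimum number of colors in an equitable vdec of `G`. -/
noncomputable def evdecNum (G : SimpleGraph V) : ℕ :=
  sInf {k : ℕ | ∃ c : Sym2 V → Fin k, IsVDEC G k c ∧ IsEquitable G k c}

/-- Vertex type of the tree `Q(r,m,n)`: the center `w₀`, the leaves `w₁,…,w_r`,
the pairs `sᵢ, s'ᵢ` (encoded as `(i,0)` and `(i,1)`), the vertices `t₁,…,tₙ`,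
and the leaves `t'_{i,j}` for `j < rv i`. -/
abbrev QVert (r m n : ℕ) (rv : Fin n → ℕ) : Type :=
  Unit ⊕ Fin r ⊕ (Fin m × Fin 2) ⊕ (Fin n ⊕ Σ i : Fin n, Fin (rv i))

/-- The tree `Q(r,m,n)` of diameter four: the center `w₀` is adjacent to the `r` leaves
`wᵢ`, to the `m` vertices `sᵢ` (each `sᵢ` having one further leaf neighbor `s'ᵢ`),
and to the `n` vertices `tᵢ`, where `tᵢ` has `rv i` further neighbors, all leaves. -/
def QGraph (r m n : ℕ) (rv : Fin n → ℕ) : SimpleGraph (QVert r m n rv) :=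
  SimpleGraph.fromRel (fun a b =>
    (a = Sum.inl () ∧
      ((∃ i, b = Sum.inr (Sum.inl i)) ∨
       (∃ i, b = Sum.inr (Sum.inr (Sum.inl (i, (0 : Fin 2))))) ∨
       (∃ i, b = Sum.inr (Sum.inr (Sum.inr (Sum.inl i)))))) ∨
    (∃ i : Fin m, a = Sum.inr (Sum.inr (Sum.inl (i, (0 : Fin 2)))) ∧
       b = Sum.inr (Sum.inr (Sum.inl (i, (1 : Fin 2))))) ∨
    (∃ (i : Fin n) (j : Fin (rv i)), a = Sum.inr (Sum.inr (Sum.inr (Sum.inl i))) ∧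
       b = Sum.inr (Sum.inr (Sum.inr (Sum.inr ⟨i, j⟩)))))


instance qvdecEq (r m n : ℕ) (rv : Fin n → ℕ) : DecidableEq (QVert r m n rv) :=
  inferInstance

instance qsym2decEq (r m n : ℕ) (rv : Fin n → ℕ) : DecidableEq (Sym2 (QVert r m n rv)) :=
  Sym2.instDecidableEq

section Aux
variable [DecidableEq V]

lemma edge_decomp {G : SimpleGraph V} {e : Sym2 V} (he : e ∈ G.edgeSet) :
    ∃ a b, e = s(a, b) ∧ G.Adj a b := by
  induction e using Sym2.ind with
  | _ a b => exact ⟨a, b, rfl, (SimpleGraph.mem_edgeSet _).mp he⟩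

lemma leaf_colset {G : SimpleGraph V} {k : ℕ} (c : Sym2 V → Fin k) {p l : V}
    (hadj : G.Adj p l) (huniq : ∀ z, G.Adj l z → z = p) :
    {a : Fin k | ∃ w, G.Adj l w ∧ c s(l, w) = a} = {c s(p, l)} := by
  ext a
  simp only [Set.mem_setOf_eq, Set.mem_singleton_iff]
  constructor
  · rintro ⟨w, hw, rfl⟩
    rw [huniq w hw, Sym2.eq_swap]
  · rintro rfl
    exact ⟨p, hadj.symm, by rw [Sym2.eq_swap]⟩

lemma defect {G : SimpleGraph V} [Finite V] {k : ℕ} {c : Sym2 V → Fin k}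
    (hle : ∀ i : Fin k, Nat.card {e : Sym2 V // e ∈ G.edgeSet ∧ c e = i} ≤ 2)
    (hne : ¬ IsEquitable G k c) :
    ∃ (j : Fin k) (e1 e2 : Sym2 V), e1 ∈ G.edgeSet ∧ e2 ∈ G.edgeSet ∧ e1 ≠ e2 ∧
      c e1 = c e2 ∧ (∀ e ∈ G.edgeSet, c e ≠ j) := by
  rw [IsEquitable] at hne
  push_neg at hne
  obtain ⟨i, j, hij⟩ := hne
  have h2 : Nat.card {e : Sym2 V // e ∈ G.edgeSet ∧ c e = i} ≤ 2 := hle i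
  have hb0 : Nat.card {e : Sym2 V // e ∈ G.edgeSet ∧ c e = j} = 0 := by omega
  have ha2 : 1 < Nat.card {e : Sym2 V // e ∈ G.edgeSet ∧ c e = i} := by omega
  have hnontriv : Nontrivial {e : Sym2 V // e ∈ G.edgeSet ∧ c e = i} :=
    Finite.one_lt_card_iff_nontrivial.mp ha2
  obtain ⟨⟨e1, he1, hce1⟩, ⟨e2, he2, hce2⟩, hne12⟩ := hnontriv.exists_pair_ne
  have hempty : IsEmpty {e : Sym2 V // e ∈ G.edgeSet ∧ c e = j} := by
    rcases Nat.card_eq_zero.mp hb0 with h | h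
    · exact h
    · exact absurd h (not_infinite_iff_finite.mpr (Finite.of_injective _ Subtype.val_injective))
  refine ⟨j, e1, e2, he1, he2, ?_, hce1.trans hce2.symm, ?_⟩
  · intro h
    exact hne12 (Subtype.ext h)
  · intro e he hc
    exact hempty.false ⟨e, he, hc⟩


lemma sym2_congr {a b d : V} (h : s(a, b) = s(a, d)) : b = d := by
  rcases Sym2.eq_iff.mp h with ⟨-, h⟩ | ⟨h1, h2⟩
  · exact h
  · exact h2.trans h1

lemma recolor_vdec (G : SimpleGraph V) {k : ℕ} {c : Sym2 V → Fin k}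
    (hc : IsVDEC G k c) {u0 v0 : V} (huv : G.Adj u0 v0) {j : Fin k}
    (hj : ∀ e ∈ G.edgeSet, c e ≠ j) :
    IsVDEC G k (Function.update c s(u0, v0) j) := by
  obtain ⟨hp, hd⟩ := hc
  have hne : u0 ≠ v0 := huv.ne
  set c' := Function.update c s(u0, v0) j with hc'def
  have key : ∀ a b : V, s(a, b) = s(u0, v0) → (a = u0 ∧ b = v0) ∨ (a = v0 ∧ b = u0) :=
    fun a b h => Sym2.eq_iff.mp h
  have mkinj : ∀ {a b d : V}, s(a, b) = s(a, d) → b = d := by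
    intro a b d h
    rcases Sym2.eq_iff.mp h with ⟨-, h⟩ | ⟨h1, h2⟩
    · exact h
    · exact h2.trans h1
  have hval : c' s(u0, v0) = j := Function.update_self _ _ _
  have hcne : ∀ e, e ≠ s(u0, v0) → c' e = c e := fun e he => Function.update_of_ne he _ _
  have hcu0 : ∀ w, w ≠ v0 → c' s(u0, w) = c s(u0, w) := by
    intro w hw
    apply Function.update_of_ne
    intro h
    rcases key _ _ h with ⟨-, h2⟩ | ⟨h1, -⟩
    · exact hw h2
    · exact hne h1
  have hcv0 : ∀ w, w ≠ u0 → c' s(v0, w) = c s(v0, w) := by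
    intro w hw
    apply Function.update_of_ne
    intro h
    rcases key _ _ h with ⟨h1, -⟩ | ⟨-, h2⟩
    · exact hne h1.symm
    · exact hw h2
  have hcother : ∀ v, v ≠ u0 → v ≠ v0 → ∀ w, c' s(v, w) = c s(v, w) := by
    intro v h1 h2 w
    apply Function.update_of_ne
    intro h
    rcases key _ _ h with ⟨h', -⟩ | ⟨h', -⟩
    · exact h1 h'
    · exact h2 h'
  constructor
  · intro u v w hv hw hvw
    rcases eq_or_ne (s(u, v)) (s(u0, v0)) with h1 | h1
    · rw [h1, hval]
      rcases eq_or_ne (s(u, w)) (s(u0, v0)) with h2 | h2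
      · exact absurd (mkinj (h1.trans h2.symm)) hvw
      · rw [hcne _ h2]
        exact fun hh => hj _ (G.mem_edgeSet.mpr hw) hh.symm
    · rw [hcne _ h1]
      rcases eq_or_ne (s(u, w)) (s(u0, v0)) with h2 | h2
      · rw [h2, hval]
        exact fun hh => hj _ (G.mem_edgeSet.mpr hv) hh
      · rw [hcne _ h2]
        exact hp hv hw hvw
  · intro u v huvne
    have hSother : ∀ x, x ≠ u0 → x ≠ v0 →
        {i : Fin k | ∃ w, G.Adj x w ∧ c' s(x, w) = i} =
        {i : Fin k | ∃ w, G.Adj x w ∧ c s(x, w) = i} := by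
      intro x h1 h2
      ext a
      constructor
      · rintro ⟨w, hw, ha⟩
        exact ⟨w, hw, by rwa [hcother x h1 h2 w] at ha⟩
      · rintro ⟨w, hw, ha⟩
        exact ⟨w, hw, by rwa [hcother x h1 h2 w]⟩
    have hjmem : ∀ x, ¬ ∃ w, G.Adj x w ∧ c s(x, w) = j := by
      rintro x ⟨w, hw, ha⟩
      exact hj _ (G.mem_edgeSet.mpr hw) ha
    have hju0 : ∃ w, G.Adj u0 w ∧ c' s(u0, w) = j := ⟨v0, huv, hval⟩
    have hjv0 : ∃ w, G.Adj v0 w ∧ c' s(v0, w) = j :=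
      ⟨u0, huv.symm, by rw [Sym2.eq_swap]; exact hval⟩
    -- key step: equality of new sets of u0 and v0 implies equality of old sets
    have hmain : {i : Fin k | ∃ w, G.Adj u0 w ∧ c' s(u0, w) = i} =
        {i : Fin k | ∃ w, G.Adj v0 w ∧ c' s(v0, w) = i} →
        {i : Fin k | ∃ w, G.Adj u0 w ∧ c s(u0, w) = i} =
        {i : Fin k | ∃ w, G.Adj v0 w ∧ c s(v0, w) = i} := by
      intro h
      ext a
      simp only [Set.mem_setOf_eq]
      constructor
      · rintro ⟨w, hw, ha⟩
        rcases eq_or_ne w v0 with rfl | hwv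
        · exact ⟨u0, hw.symm, by rw [Sym2.eq_swap]; exact ha⟩
        · have ha' : a ∈ {i : Fin k | ∃ w, G.Adj u0 w ∧ c' s(u0, w) = i} :=
            ⟨w, hw, by rw [hcu0 w hwv]; exact ha⟩
          rw [h] at ha'
          obtain ⟨w', hw', ha''⟩ := ha'
          have hwu : w' ≠ u0 := by
            intro hh
            rw [hh, show s(v0, u0) = s(u0, v0) from Sym2.eq_swap, hval] at ha''
            exact hj _ (G.mem_edgeSet.mpr hw) (ha.trans ha''.symm)
          exact ⟨w', hw', by rw [← hcv0 w' hwu]; exact ha''⟩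
      · rintro ⟨w, hw, ha⟩
        rcases eq_or_ne w u0 with rfl | hwu
        · exact ⟨v0, hw.symm, by rw [Sym2.eq_swap]; exact ha⟩
        · have ha' : a ∈ {i : Fin k | ∃ w, G.Adj v0 w ∧ c' s(v0, w) = i} :=
            ⟨w, hw, by rw [hcv0 w hwu]; exact ha⟩
          rw [← h] at ha'
          obtain ⟨w', hw', ha''⟩ := ha'
          have hwv : w' ≠ v0 := by
            intro hh
            rw [hh, hval] at ha''
            exact hj _ (G.mem_edgeSet.mpr hw) (ha.trans ha''.symm)
          exact ⟨w', hw', by rw [← hcu0 w' hwv]; exact ha''⟩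
    have changed_ne : ∀ x y : V, (x = u0 ∨ x = v0) → y ≠ u0 → y ≠ v0 →
        {i : Fin k | ∃ w, G.Adj x w ∧ c' s(x, w) = i} =
        {i : Fin k | ∃ w, G.Adj y w ∧ c' s(y, w) = i} → False := by
      intro x y hx hy1 hy2 h
      have h1 : j ∈ {i : Fin k | ∃ w, G.Adj x w ∧ c' s(x, w) = i} := by
        rcases hx with rfl | rfl
        exacts [hju0, hjv0]
      rw [h, hSother y hy1 hy2] at h1
      exact hjmem y h1
    intro h
    rcases eq_or_ne u u0 with hu1 | hu1
    · rcases eq_or_ne v v0 with hv1 | hv1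
      · rw [hu1, hv1] at h
        exact hd u0 v0 hne (hmain h)
      · have hv2 : v ≠ u0 := fun hh => huvne (hu1.trans hh.symm)
        exact changed_ne u v (Or.inl hu1) hv2 hv1 h
    · rcases eq_or_ne u v0 with hu2 | hu2
      · rcases eq_or_ne v u0 with hv1 | hv1
        · rw [hu2, hv1] at h
          exact hd u0 v0 hne (hmain h.symm)
        · have hv2 : v ≠ v0 := fun hh => huvne (hu2.trans hh.symm)
          exact changed_ne u v (Or.inr hu2) hv1 hv2 h
      · rcases eq_or_ne v u0 with hv1 | hv1
        · exact changed_ne v u (Or.inl hv1) hu1 hu2 h.symm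
        · rcases eq_or_ne v v0 with hv2 | hv2
          · exact changed_ne v u (Or.inr hv2) hu1 hu2 h.symm
          · rw [hSother u hu1 hu2, hSother v hv1 hv2] at h
            exact hd u v huvne h

end Aux

namespace QAux
variable {r m n : ℕ} {rv : Fin n → ℕ}

abbrev qw0 : QVert r m n rv := Sum.inl ()
abbrev qw (i : Fin r) : QVert r m n rv := Sum.inr (Sum.inl i)
abbrev qs (i : Fin m) (b : Fin 2) : QVert r m n rv := Sum.inr (Sum.inr (Sum.inl (i, b)))
abbrev qt (i : Fin n) : QVert r m n rv := Sum.inr (Sum.inr (Sum.inr (Sum.inl i)))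
abbrev qt' (i : Fin n) (j : Fin (rv i)) : QVert r m n rv :=
  Sum.inr (Sum.inr (Sum.inr (Sum.inr ⟨i, j⟩)))

lemma adj_w0w (i : Fin r) : (QGraph r m n rv).Adj qw0 (qw i) := by
  rw [QGraph, SimpleGraph.fromRel_adj]
  exact ⟨by simp, Or.inl (Or.inl ⟨rfl, Or.inl ⟨i, rfl⟩⟩)⟩

lemma adj_w0s (i : Fin m) : (QGraph r m n rv).Adj qw0 (qs i 0) := by
  rw [QGraph, SimpleGraph.fromRel_adj]
  exact ⟨by simp, Or.inl (Or.inl ⟨rfl, Or.inr (Or.inl ⟨i, rfl⟩)⟩)⟩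

lemma adj_w0t (i : Fin n) : (QGraph r m n rv).Adj qw0 (qt i) := by
  rw [QGraph, SimpleGraph.fromRel_adj]
  exact ⟨by simp, Or.inl (Or.inl ⟨rfl, Or.inr (Or.inr ⟨i, rfl⟩)⟩)⟩

lemma adj_s (i : Fin m) : (QGraph r m n rv).Adj (qs i 0) (qs i 1) := by
  rw [QGraph, SimpleGraph.fromRel_adj]
  exact ⟨by simp, Or.inl (Or.inr (Or.inl ⟨i, rfl, rfl⟩))⟩

lemma adj_t (i : Fin n) (j : Fin (rv i)) : (QGraph r m n rv).Adj (qt i) (qt' i j) := by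
  rw [QGraph, SimpleGraph.fromRel_adj]
  exact ⟨by simp, Or.inl (Or.inr (Or.inr ⟨i, j, rfl, rfl⟩))⟩

lemma nbr_w {i : Fin r} {z : QVert r m n rv} (h : (QGraph r m n rv).Adj (qw i) z) :
    z = qw0 := by
  rw [QGraph, SimpleGraph.fromRel_adj] at h
  obtain ⟨-, h | h⟩ := h <;> simp_all

lemma nbr_s' {i : Fin m} {z : QVert r m n rv} (h : (QGraph r m n rv).Adj (qs i 1) z) :
    z = qs i 0 := by
  rw [QGraph, SimpleGraph.fromRel_adj] at h
  obtain ⟨-, h | h⟩ := h <;> simp_all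

lemma nbr_t' {i : Fin n} {j : Fin (rv i)} {z : QVert r m n rv}
    (h : (QGraph r m n rv).Adj (qt' i j) z) : z = qt i := by
  rw [QGraph, SimpleGraph.fromRel_adj] at h
  obtain ⟨-, h | h⟩ := h
  · simp_all
  · rcases h with ⟨-, ⟨i1, hh⟩ | ⟨i1, hh⟩ | ⟨i1, hh⟩⟩ | ⟨i1, hh1, hh2⟩ | ⟨i1, j1, hz, hh⟩
    · simp at hh
    · simp at hh
    · simp at hh
    · simp at hh2
    · simp only [Sum.inr.injEq, Sigma.mk.inj_iff] at hh
      obtain ⟨rfl, -⟩ := hh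
      exact hz

lemma pendant {e : Sym2 (QVert r m n rv)} (he : e ∈ (QGraph r m n rv).edgeSet)
    (hw : (qw0 : QVert r m n rv) ∉ e) :
    ∃ p l : QVert r m n rv, e = s(p, l) ∧ (QGraph r m n rv).Adj p l ∧
      ∀ z, (QGraph r m n rv).Adj l z → z = p := by
  induction e using Sym2.ind with
  | _ a b =>
    have hab : (QGraph r m n rv).Adj a b := (SimpleGraph.mem_edgeSet _).mp he
    simp only [Sym2.mem_iff, not_or] at hw
    obtain ⟨hwa, hwb⟩ := hw
    rw [QGraph, SimpleGraph.fromRel_adj] at hab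
    obtain ⟨hne, h | h⟩ := hab
    · rcases h with ⟨ha', -⟩ | ⟨i, ha', hb'⟩ | ⟨i, j, ha', hb'⟩
      · exact absurd ha'.symm hwa
      · subst ha'; subst hb'
        exact ⟨qs i 0, qs i 1, rfl, adj_s i, fun z hz => nbr_s' hz⟩
      · subst ha'; subst hb'
        exact ⟨qt i, qt' i j, rfl, adj_t i j, fun z hz => nbr_t' hz⟩
    · rcases h with ⟨hb', -⟩ | ⟨i, hb', ha'⟩ | ⟨i, j, hb', ha'⟩
      · exact absurd hb'.symm hwb
      · subst ha'; subst hb'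
        exact ⟨qs i 0, qs i 1, Sym2.eq_swap, adj_s i, fun z hz => nbr_s' hz⟩
      · subst ha'; subst hb'
        exact ⟨qt i, qt' i j, Sym2.eq_swap, adj_t i j, fun z hz => nbr_t' hz⟩

lemma exists_nbr (v : QVert r m n rv) (hv : v ≠ qw0) :
    ∃ z, (QGraph r m n rv).Adj v z := by
  rcases v with u | i | ⟨i, b⟩ | i | ⟨i, j⟩
  · cases u; exact absurd rfl hv
  · exact ⟨qw0, (adj_w0w i).symm⟩
  · fin_cases b
    · exact ⟨qs i 1, adj_s i⟩
    · exact ⟨qs i 0, (adj_s i).symm⟩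
  · exact ⟨qw0, (adj_w0t i).symm⟩
  · exact ⟨qt i, (adj_t i j).symm⟩

lemma not_tiny (hdiam : (QGraph r m n rv).diam = 4) : ¬(r = 1 ∧ m = 0 ∧ n = 0) := by
  rintro ⟨rfl, rfl, rfl⟩
  have h1 : (QGraph 1 0 0 rv).ediam ≤ 1 := by
    apply SimpleGraph.ediam_le_of_edist_le
    intro u v
    rcases u with u | i | ⟨i, b⟩ | i | ⟨i, j⟩
    · rcases v with u' | i' | ⟨i', b'⟩ | i' | ⟨i', j'⟩
      · cases u; cases u'; rw [SimpleGraph.edist_self]; exact zero_le_one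
      · exact (SimpleGraph.edist_eq_one_iff_adj.mpr (by cases u; exact adj_w0w i')).le
      · exact i'.elim0
      · exact i'.elim0
      · exact i'.elim0
    · rcases v with u' | i' | ⟨i', b'⟩ | i' | ⟨i', j'⟩
      · exact (SimpleGraph.edist_eq_one_iff_adj.mpr (by cases u'; exact (adj_w0w i).symm)).le
      · rw [Subsingleton.elim i i', SimpleGraph.edist_self]; exact zero_le_one
      · exact i'.elim0
      · exact i'.elim0
      · exact i'.elim0
    · exact i.elim0
    · exact i.elim0
    · exact i.elim0
  rw [SimpleGraph.diam] at hdiam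
  have h2 : (QGraph 1 0 0 rv).ediam.toNat ≤ (1 : ℕ∞).toNat :=
    ENat.toNat_le_toNat h1 (by simp)
  simp [hdiam] at h2

lemma no_deg1_pair (hrv : ∀ i, 2 ≤ rv i) (hdiam : (QGraph r m n rv).diam = 4)
    {u v : QVert r m n rv} (hadj : (QGraph r m n rv).Adj u v)
    (hu : ∀ z, (QGraph r m n rv).Adj u z → z = v)
    (hv : ∀ z, (QGraph r m n rv).Adj v z → z = u) : False := by
  have core : ∀ x y : QVert r m n rv,
      ((x = Sum.inl () ∧
      ((∃ i, y = Sum.inr (Sum.inl i)) ∨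
       (∃ i, y = Sum.inr (Sum.inr (Sum.inl (i, (0 : Fin 2))))) ∨
       (∃ i, y = Sum.inr (Sum.inr (Sum.inr (Sum.inl i)))))) ∨
    (∃ i : Fin m, x = Sum.inr (Sum.inr (Sum.inl (i, (0 : Fin 2)))) ∧
       y = Sum.inr (Sum.inr (Sum.inl (i, (1 : Fin 2))))) ∨
    (∃ (i : Fin n) (j : Fin (rv i)), x = Sum.inr (Sum.inr (Sum.inr (Sum.inl i))) ∧
       y = Sum.inr (Sum.inr (Sum.inr (Sum.inr ⟨i, j⟩))))) →
      (∀ z, (QGraph r m n rv).Adj x z → z = y) →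
      (∀ z, (QGraph r m n rv).Adj y z → z = x) → False := by
    intro x y hrel hx hy
    rcases hrel with ⟨hx', ⟨i, hy'⟩ | ⟨i, hy'⟩ | ⟨i, hy'⟩⟩ | ⟨i, hx', hy'⟩ | ⟨i, j, hx', hy'⟩
    · -- x = w0, y = qw i : derive r = 1, m = 0, n = 0
      subst hx'; subst hy'
      have hm : m = 0 := by
        by_contra hm
        have h0 : (QGraph r m n rv).Adj qw0 (qs ⟨0, Nat.pos_of_ne_zero hm⟩ 0) := adj_w0s _
        exact absurd (hx _ h0) (by simp)
      have hn : n = 0 := by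
        by_contra hn
        have h0 : (QGraph r m n rv).Adj qw0 (qt ⟨0, Nat.pos_of_ne_zero hn⟩) := adj_w0t _
        exact absurd (hx _ h0) (by simp)
      have hr1 : r = 1 := by
        have hrpos : 0 < r := i.pos
        by_contra hr
        have hr2 : 2 ≤ r := by omega
        have e0 : (⟨0, by omega⟩ : Fin r) ≠ ⟨1, by omega⟩ := by simp
        have q0 := hx _ (adj_w0w (⟨0, by omega⟩ : Fin r))
        have q1 := hx _ (adj_w0w (⟨1, by omega⟩ : Fin r))
        rw [← q1] at q0
        simp only [Sum.inr.injEq, Sum.inl.injEq] at q0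
        exact e0 (q0 ▸ rfl)
      exact not_tiny hdiam ⟨hr1, hm, hn⟩
    · -- x = w0, y = qs i 0
      subst hx'; subst hy'
      have h0 : (QGraph r m n rv).Adj (qs i 0) (qs i 1) := adj_s i
      have := hy _ h0
      simp at this
    · -- x = w0, y = qt i
      subst hx'; subst hy'
      have h0 : (QGraph r m n rv).Adj (qt i) (qt' i ⟨0, by have := hrv i; omega⟩) := adj_t i _
      have := hy _ h0
      simp at this
    · -- x = qs i 0, y = qs i 1
      subst hx'; subst hy'
      have h0 : (QGraph r m n rv).Adj (qs i 0) qw0 := (adj_w0s i).symm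
      have := hx _ h0
      simp at this
    · -- x = qt i, y = qt' i j
      subst hx'; subst hy'
      have h0 : (QGraph r m n rv).Adj (qt i) qw0 := (adj_w0t i).symm
      have := hx _ h0
      simp at this
  have hadj' := hadj
  rw [QGraph, SimpleGraph.fromRel_adj] at hadj'
  obtain ⟨-, h | h⟩ := hadj'
  · exact core u v h hu hv
  · exact core v u h hv hu



lemma class_card_le_two {k : ℕ} {c : Sym2 (QVert r m n rv) → Fin k}
    (hc : IsVDEC (QGraph r m n rv) k c) (i : Fin k) :
    Nat.card {e : Sym2 (QVert r m n rv) // e ∈ (QGraph r m n rv).edgeSet ∧ c e = i} ≤ 2 := by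
  classical
  have hinj : Function.Injective
      (fun e : {e : Sym2 (QVert r m n rv) // e ∈ (QGraph r m n rv).edgeSet ∧ c e = i} =>
        decide ((qw0 : QVert r m n rv) ∈ e.val)) := by
    rintro ⟨e1, he1, hc1⟩ ⟨e2, he2, hc2⟩ hf
    simp only [decide_eq_decide] at hf
    by_cases h1 : (qw0 : QVert r m n rv) ∈ e1
    · have h2 : (qw0 : QVert r m n rv) ∈ e2 := hf.mp h1
      obtain ⟨b1, rfl⟩ := Sym2.mem_iff_exists.mp h1
      obtain ⟨b2, rfl⟩ := Sym2.mem_iff_exists.mp h2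
      have ha1 := (SimpleGraph.mem_edgeSet _).mp he1
      have ha2 := (SimpleGraph.mem_edgeSet _).mp he2
      have hb : b1 = b2 := by
        by_contra hb
        exact hc.1 ha1 ha2 hb (hc1.trans hc2.symm)
      subst hb
      rfl
    · have h2 : (qw0 : QVert r m n rv) ∉ e2 := fun hh => h1 (hf.mpr hh)
      obtain ⟨p1, l1, rfl, hadj1, hu1⟩ := pendant he1 h1
      obtain ⟨p2, l2, rfl, hadj2, hu2⟩ := pendant he2 h2
      have hs1 := leaf_colset c hadj1 hu1
      have hs2 := leaf_colset c hadj2 hu2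
      have hll : l1 = l2 := by
        by_contra hll
        apply hc.2 l1 l2 hll
        rw [hs1, hs2, hc1, hc2]
      subst hll
      have hpp : p2 = p1 := hu1 p2 hadj2.symm
      subst hpp
      rfl
  calc Nat.card {e : Sym2 (QVert r m n rv) // e ∈ (QGraph r m n rv).edgeSet ∧ c e = i}
      ≤ Nat.card Bool := Nat.card_le_card_of_injective _ hinj
    _ = 2 := by simp [Nat.card_eq_fintype_card]

lemma exists_vdec (hrv : ∀ i, 2 ≤ rv i) (hdiam : (QGraph r m n rv).diam = 4) :
    ∃ (k : ℕ) (c : Sym2 (QVert r m n rv) → Fin k), IsVDEC (QGraph r m n rv) k c := by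
  classical
  refine ⟨Fintype.card (Sym2 (QVert r m n rv)),
    fun e => (Fintype.equivFin (Sym2 (QVert r m n rv))) e, ?_, ?_⟩
  · intro u v w hv hw hvw h
    exact hvw (sym2_congr ((Fintype.equivFin (Sym2 (QVert r m n rv))).injective h))
  · intro u v huvne h
    have key : ∀ (x y : QVert r m n rv), x ≠ y →
        ({i : Fin (Fintype.card (Sym2 (QVert r m n rv))) |
            ∃ w, (QGraph r m n rv).Adj x w ∧ (Fintype.equivFin (Sym2 (QVert r m n rv))) s(x, w) = i} =
         {i : Fin (Fintype.card (Sym2 (QVert r m n rv))) |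
            ∃ w, (QGraph r m n rv).Adj y w ∧ (Fintype.equivFin (Sym2 (QVert r m n rv))) s(y, w) = i}) →
        ∀ w, (QGraph r m n rv).Adj x w → w = y := by
      intro x y hxy hset w hw
      have hmem : (Fintype.equivFin (Sym2 (QVert r m n rv))) s(x, w) ∈
          {i : Fin (Fintype.card (Sym2 (QVert r m n rv))) |
            ∃ w', (QGraph r m n rv).Adj x w' ∧ (Fintype.equivFin (Sym2 (QVert r m n rv))) s(x, w') = i} :=
        ⟨w, hw, rfl⟩
      rw [hset] at hmem
      obtain ⟨w', hw', he⟩ := hmem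
      have heq := (Fintype.equivFin (Sym2 (QVert r m n rv))).injective he
      rcases Sym2.eq_iff.mp heq with ⟨h1, h2⟩ | ⟨h1, h2⟩
      · exact absurd h1.symm hxy
      · exact h1.symm
    by_cases hu : ∃ z, (QGraph r m n rv).Adj u z
    · obtain ⟨z, hz⟩ := hu
      have hzv : z = v := key u v huvne h z hz
      rw [hzv] at hz
      exact no_deg1_pair hrv hdiam hz (key u v huvne h) (key v u huvne.symm h.symm)
    · have hu0 : u = qw0 := by
        by_contra hh
        exact hu (exists_nbr u hh)
      have hv0 : v = qw0 := by
        by_contra hh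
        obtain ⟨z, hz⟩ := exists_nbr v hh
        have hmem : (Fintype.equivFin (Sym2 (QVert r m n rv))) s(v, z) ∈
            {i : Fin (Fintype.card (Sym2 (QVert r m n rv))) |
              ∃ w', (QGraph r m n rv).Adj v w' ∧ (Fintype.equivFin (Sym2 (QVert r m n rv))) s(v, w') = i} :=
          ⟨z, hz, rfl⟩
        rw [← h] at hmem
        obtain ⟨w', hw', -⟩ := hmem
        exact hu ⟨w', hw'⟩
      exact huvne (hu0.trans hv0.symm)

lemma fixup (hrv : ∀ i, 2 ≤ rv i) (hdiam : (QGraph r m n rv).diam = 4) :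
    ∀ (N k : ℕ) (c : Sym2 (QVert r m n rv) → Fin k),
      IsVDEC (QGraph r m n rv) k c →
      {z : Fin k | ∀ e ∈ (QGraph r m n rv).edgeSet, c e ≠ z}.ncard ≤ N →
      ∃ c', IsVDEC (QGraph r m n rv) k c' ∧ IsEquitable (QGraph r m n rv) k c' := by
  classical
  intro N
  induction N with
  | zero =>
    intro k c hc hN
    by_cases heq : IsEquitable (QGraph r m n rv) k c
    · exact ⟨c, hc, heq⟩
    · exfalso
      obtain ⟨j, e1, e2, he1, he2, hne12, hcc, hjun⟩ := defect (class_card_le_two hc) heq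
      have hj : j ∈ {z : Fin k | ∀ e ∈ (QGraph r m n rv).edgeSet, c e ≠ z} := hjun
      have h0 : {z : Fin k | ∀ e ∈ (QGraph r m n rv).edgeSet, c e ≠ z}.ncard = 0 :=
        Nat.le_zero.mp hN
      rw [Set.ncard_eq_zero (Set.toFinite _)] at h0
      rw [h0] at hj
      exact hj
  | succ N IH =>
    intro k c hc hN
    by_cases heq : IsEquitable (QGraph r m n rv) k c
    · exact ⟨c, hc, heq⟩
    · obtain ⟨j, e1, e2, he1, he2, hne12, hcc, hjun⟩ := defect (class_card_le_two hc) heq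
      obtain ⟨u0, v0, rfl, hadj⟩ := edge_decomp he1
      have key : ∀ (c' : Sym2 (QVert r m n rv) → Fin k),
          c' s(u0, v0) = j → (∀ e, e ≠ s(u0, v0) → c' e = c e) →
          {z : Fin k | ∀ e ∈ (QGraph r m n rv).edgeSet, c' e ≠ z}.ncard ≤ N := by
        intro c' hval hoth
        have hsub : {z : Fin k | ∀ e ∈ (QGraph r m n rv).edgeSet, c' e ≠ z} ⊆
            {z : Fin k | ∀ e ∈ (QGraph r m n rv).edgeSet, c e ≠ z} \ {j} := by
          intro z hz
          constructor
          · intro e he hce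
            by_cases hee : e = s(u0, v0)
            · have hce2 : c e2 = z := by rw [← hcc, ← hee, hce]
              have hne2 : e2 ≠ s(u0, v0) := fun hh => hne12 hh.symm
              exact hz e2 he2 ((hoth e2 hne2).trans hce2)
            · exact hz e he ((hoth e hee).trans hce)
          · intro hzj
            simp only [Set.mem_singleton_iff] at hzj
            exact hz s(u0, v0) he1 (by rw [hval, hzj])
        have hjm : j ∈ {z : Fin k | ∀ e ∈ (QGraph r m n rv).edgeSet, c e ≠ z} := hjun
        have hcard := Set.ncard_le_ncard hsub (Set.toFinite _)
        rw [Set.ncard_diff_singleton_of_mem hjm] at hcard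
        have hpos : 0 < {z : Fin k | ∀ e ∈ (QGraph r m n rv).edgeSet, c e ≠ z}.ncard :=
          (Set.ncard_pos (Set.toFinite _)).mpr ⟨j, hjm⟩
        omega
      exact IH k _ (recolor_vdec _ hc hadj hjun)
        (key _ (Function.update_self _ _ _) (fun e he => Function.update_of_ne he _ _))
end QAux

/-- For every tree `Q = Q(r,m,n)` of diameter four,
`χ'ₑₛ(Q) = χ'ₛ(Q)`. -/
theorem evdecNum_QGraph (r m n : ℕ) (rv : Fin n → ℕ) (hrv : ∀ i, 2 ≤ rv i)
    (hdiam : (QGraph r m n rv).diam = 4) :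
    evdecNum (QGraph r m n rv) = vdecNum (QGraph r m n rv) := by
  classical
  obtain ⟨K, cK, hcK⟩ := QAux.exists_vdec hrv hdiam
  have hSv : {k : ℕ | ∃ c : Sym2 (QVert r m n rv) → Fin k,
      IsVDEC (QGraph r m n rv) k c}.Nonempty := ⟨K, cK, hcK⟩
  have hmem : vdecNum (QGraph r m n rv) ∈ {k : ℕ | ∃ c : Sym2 (QVert r m n rv) → Fin k,
      IsVDEC (QGraph r m n rv) k c} := Nat.sInf_mem hSv
  obtain ⟨c0, hc0⟩ := hmem
  obtain ⟨c1, hc1, he1⟩ := QAux.fixup hrv hdiam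
    ({z : Fin (vdecNum (QGraph r m n rv)) |
        ∀ e ∈ (QGraph r m n rv).edgeSet, c0 e ≠ z}.ncard) _ c0 hc0 le_rfl
  have hmemE : vdecNum (QGraph r m n rv) ∈ {k : ℕ | ∃ c : Sym2 (QVert r m n rv) → Fin k,
      IsVDEC (QGraph r m n rv) k c ∧ IsEquitable (QGraph r m n rv) k c} := ⟨c1, hc1, he1⟩
  have h3 : evdecNum (QGraph r m n rv) ≤ vdecNum (QGraph r m n rv) := Nat.sInf_le hmemE
  have h4 : evdecNum (QGraph r m n rv) ∈ {k : ℕ | ∃ c : Sym2 (QVert r m n rv) → Fin k,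
      IsVDEC (QGraph r m n rv) k c ∧ IsEquitable (QGraph r m n rv) k c} :=
    Nat.sInf_mem ⟨_, hmemE⟩
  obtain ⟨c2, hc2, -⟩ := h4
  have h5 : vdecNum (QGraph r m n rv) ≤ evdecNum (QGraph r m n rv) := Nat.sInf_le ⟨c2, hc2⟩
  omega
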